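/- For any Had_k-to-2Lin(2) gadget G there exists a Had_k-to-2Lin(2) gadget G̃ with completeness 1 − 2^{−k} such that (1 − rs(G))/(1 − c(G)) ≤ (1 − rs(G̃))/(1 − c(G̃)). -/

import Mathlib

open Finset
open scoped Classical

noncomputable section

/-- Boolean functions `𝔽₂^k → {1,−1}`, encoded with `true ↦ −1` and `false ↦ 1`. -/
abbrev BF (k : ℕ) := (Fin k → ZMod 2) → Bool

/-- The negation `−f` of a Boolean function. -/
def negB {k : ℕ} (f : BF k) : BF k := fun x => !(f x)

/-- The linear character `χ_α` as a Boolean function: `χ_α(x) = −1` iff `⟨α,x⟩ = 1`. -/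
def chiB {k : ℕ} (α : Fin k → ZMod 2) : BF k := fun x => decide (dotProduct α x = 1)

/-- `x_f` is a primary variable iff `f = ±χ_α` for some `α ≠ 0`. -/
def Primary {k : ℕ} (f : BF k) : Prop :=
  ∃ α : Fin k → ZMod 2, α ≠ 0 ∧ (f = chiB α ∨ f = negB (chiB α))

/-- The constant function `1`. -/
def oneB (k : ℕ) : BF k := fun _ => false

/-- The constant function `−1`. -/
def negOneB (k : ℕ) : BF k := fun _ => true

/-- `val(A,G) = Σ_{pairs} G(f₁,f₂)[A(x_{f₁}) = A(x_{f₂})]` (each unordered pair counted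
once via the symmetric sum). -/
def valA {k : ℕ} (G : BF k → BF k → ℝ) (A : BF k → ZMod 2) : ℝ :=
  (1 / 2 : ℝ) * ∑ f₁, ∑ f₂, G f₁ f₂ * (if A f₁ = A f₂ then 1 else 0)

/-- Assignments folded on the primary variables. -/
def sFoldSet (k : ℕ) : Finset (BF k → ZMod 2) :=
  univ.filter fun P => ∀ f, Primary f → P (negB f) = 1 + P f

/-- The (true) soundness `s(G)`: the expectation, over uniformly random folded assignments
`P` of the primary variables, of the maximum of `val(A,G)` over folded extensions `A`
of `P`. -/
def soundness {k : ℕ} (G : BF k → BF k → ℝ) : ℝ :=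
  ((sFoldSet k).card : ℝ)⁻¹ * ∑ P ∈ sFoldSet k,
    sSup {v : ℝ | ∃ A : BF k → ZMod 2, (∀ f, A (negB f) = 1 + A f) ∧
      (∀ f, Primary f → A f = P f) ∧ v = valA G A}

/-- Assignments folded on the primary variables and on the constants `x_1, x_{−1}`. -/
def rsFoldSet (k : ℕ) : Finset (BF k → ZMod 2) :=
  univ.filter fun P => ∀ f, (Primary f ∨ f = oneB k ∨ f = negOneB k) →
    P (negB f) = 1 + P f

/-- Wiman's relaxed soundness `rs(G)`: as `s(G)`, but the assignments `P` are folded on the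
primary variables and the constants, and the extension `A` must agree with `P` there but is
not required to be folded on the auxiliary variables. -/
def rsoundness {k : ℕ} (G : BF k → BF k → ℝ) : ℝ :=
  ((rsFoldSet k).card : ℝ)⁻¹ * ∑ P ∈ rsFoldSet k,
    sSup {v : ℝ | ∃ A : BF k → ZMod 2,
      (∀ f, (Primary f ∨ f = oneB k ∨ f = negOneB k) → A f = P f) ∧ v = valA G A}

/-- The normalized Hamming distance between Boolean functions. -/
def ndistB {k : ℕ} (f₁ f₂ : BF k) : ℝ :=
  (2 ^ k : ℝ)⁻¹ * ∑ x, if f₁ x = f₂ x then (0 : ℝ) else 1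

/-- The completeness `c(G) = 1 − Σ G(f₁,f₂) dist(f₁,f₂)`. -/
def completeness {k : ℕ} (G : BF k → BF k → ℝ) : ℝ :=
  1 - (1 / 2 : ℝ) * ∑ f₁, ∑ f₂, G f₁ f₂ * ndistB f₁ f₂

namespace Wiman

variable {k : ℕ}

/-- A fixed equivalence between the domain and `Fin (2^k)`. -/
noncomputable def eX (k : ℕ) : (Fin k → ZMod 2) ≃ Fin (2 ^ k) :=
  Fintype.equivFinOfCardEq (by simp)

/-- The `j`-th function on the canonical path from `f₁` to `f₂`. -/
noncomputable def pf (f₁ f₂ : BF k) (j : ℕ) : BF k :=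
  fun x => if ((eX k x : ℕ) < j) then f₂ x else f₁ x

lemma pf_zero (f₁ f₂ : BF k) : pf f₁ f₂ 0 = f₁ := by
  funext x; simp [pf]

lemma pf_last (f₁ f₂ : BF k) : pf f₁ f₂ (2 ^ k) = f₂ := by
  funext x; simp [pf, (eX k x).isLt]

lemma pf_agree {f₁ f₂ : BF k} {j : ℕ} {y : Fin k → ZMod 2} (hy : (eX k y : ℕ) ≠ j) :
    pf f₁ f₂ j y = pf f₁ f₂ (j + 1) y := by
  simp only [pf]
  rcases Nat.lt_or_ge ((eX k y : ℕ)) j with h | h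
  · rw [if_pos h, if_pos (by omega)]
  · rw [if_neg (by omega), if_neg (by omega)]

lemma pf_eq_succ_iff {f₁ f₂ : BF k} {j : ℕ} {x : Fin k → ZMod 2}
    (hx : (eX k x : ℕ) = j) :
    pf f₁ f₂ j = pf f₁ f₂ (j + 1) ↔ f₁ x = f₂ x := by
  have hxj : pf f₁ f₂ j x = f₁ x := by simp [pf, hx]
  have hxj1 : pf f₁ f₂ (j + 1) x = f₂ x := by simp [pf, hx]
  constructor
  · intro h
    rw [← hxj, ← hxj1, h]
  · intro h
    funext y
    by_cases hy : (eX k y : ℕ) = j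
    · have hyx : y = x := (eX k).injective (Fin.ext (by rw [hx, hy]))
      subst hyx
      rw [hxj, hxj1, h]
    · exact pf_agree hy

lemma ndist_adj {f₁ f₂ : BF k} {j : ℕ} (hj : j < 2 ^ k)
    (h : pf f₁ f₂ j ≠ pf f₁ f₂ (j + 1)) :
    ndistB (pf f₁ f₂ j) (pf f₁ f₂ (j + 1)) = (2 ^ k : ℝ)⁻¹ := by
  set x₀ : Fin k → ZMod 2 := (eX k).symm ⟨j, hj⟩ with hx₀
  have hex₀ : (eX k x₀ : ℕ) = j := by rw [hx₀]; simp
  have hne : pf f₁ f₂ j x₀ ≠ pf f₁ f₂ (j + 1) x₀ := by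
    intro heq
    apply h
    funext y
    by_cases hy : (eX k y : ℕ) = j
    · have hyx : y = x₀ := (eX k).injective (Fin.ext (by rw [hex₀, hy]))
      rw [hyx]; exact heq
    · exact pf_agree hy
  have hsum : (∑ x, if pf f₁ f₂ j x = pf f₁ f₂ (j + 1) x then (0:ℝ) else 1) = 1 := by
    rw [Finset.sum_eq_single x₀]
    · rw [if_neg hne]
    · intro y _ hy
      have hyj : (eX k y : ℕ) ≠ j := by
        intro hc
        exact hy ((eX k).injective (Fin.ext (by rw [hc, hex₀])))
      rw [if_pos (pf_agree hyj)]
    · intro hx; exact absurd (Finset.mem_univ x₀) hx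
  rw [ndistB, hsum, mul_one]

lemma Dsum_eq (f₁ f₂ : BF k) :
    (∑ j ∈ range (2 ^ k), if pf f₁ f₂ j = pf f₁ f₂ (j + 1) then (0:ℝ) else 1)
      = (2 ^ k : ℝ) * ndistB f₁ f₂ := by
  have h1 : (∑ j ∈ range (2 ^ k), if pf f₁ f₂ j = pf f₁ f₂ (j + 1) then (0:ℝ) else 1)
      = ∑ i : Fin (2 ^ k), if pf f₁ f₂ i = pf f₁ f₂ (i + 1) then (0:ℝ) else 1 := by
    rw [Finset.sum_range fun j => if pf f₁ f₂ j = pf f₁ f₂ (j + 1) then (0:ℝ) else 1]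
  have h2 : (∑ i : Fin (2 ^ k), if pf f₁ f₂ (i:ℕ) = pf f₁ f₂ ((i:ℕ) + 1) then (0:ℝ) else 1)
      = ∑ x, if f₁ x = f₂ x then (0:ℝ) else 1 := by
    rw [← Equiv.sum_comp (eX k) (fun i => if pf f₁ f₂ (i:ℕ) = pf f₁ f₂ ((i:ℕ) + 1) then (0:ℝ) else 1)]
    refine Finset.sum_congr rfl fun x _ => ?_
    exact if_congr (pf_eq_succ_iff rfl) rfl rfl
  rw [h1, h2, ndistB]
  rw [← mul_assoc, mul_inv_cancel₀ (by positivity), one_mul]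

lemma exists_cut (A : BF k → ZMod 2) (f₁ f₂ : BF k) (h : A f₁ ≠ A f₂) :
    ∃ j ∈ range (2 ^ k), A (pf f₁ f₂ j) ≠ A (pf f₁ f₂ (j + 1)) := by
  by_contra hc
  push_neg at hc
  have key : ∀ j ≤ 2 ^ k, A (pf f₁ f₂ j) = A f₁ := by
    intro j
    induction j with
    | zero => intro _; rw [pf_zero]
    | succ n ih =>
      intro hn
      rw [← hc n (Finset.mem_range.mpr (by omega))]
      exact ih (by omega)
  have := key (2 ^ k) le_rfl
  rw [pf_last] at this
  exact h this.symm

lemma pf_ne_neg (hk : 1 ≤ k) {f₁ f₂ : BF k} {j : ℕ} (hj : j < 2 ^ k) :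
    pf f₁ f₂ j ≠ negB (pf f₁ f₂ (j + 1)) := by
  intro h
  have h2 : 2 ≤ 2 ^ k := by
    calc 2 = 2 ^ 1 := rfl
    _ ≤ 2 ^ k := Nat.pow_le_pow_right (by norm_num) hk
  obtain ⟨i, hi⟩ : ∃ i : Fin (2 ^ k), (i : ℕ) ≠ j := by
    by_cases hj0 : j = 0
    · exact ⟨⟨1, by omega⟩, by simp [hj0]⟩
    · exact ⟨⟨0, by omega⟩, by simp; omega⟩
  set y := (eX k).symm i with hy
  have hey : (eX k y : ℕ) = (i : ℕ) := by rw [hy]; simp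
  have hagree : pf f₁ f₂ j y = pf f₁ f₂ (j + 1) y := pf_agree (by rw [hey]; exact hi)
  have := congrFun h y
  rw [hagree, negB] at this
  simp at this


/-- indicator that `{f,g}` is the `j`-th (nondegenerate) path edge from `f₁` to `f₂`. -/
noncomputable def ind (f₁ f₂ : BF k) (j : ℕ) (f g : BF k) : ℝ :=
  if pf f₁ f₂ j ≠ pf f₁ f₂ (j + 1) ∧
      ((f = pf f₁ f₂ j ∧ g = pf f₁ f₂ (j + 1)) ∨ (f = pf f₁ f₂ (j + 1) ∧ g = pf f₁ f₂ j))
  then 1 else 0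

/-- The subdivided gadget with normalization constant `C`. -/
noncomputable def Gtil (C : ℝ) (G : BF k → BF k → ℝ) (f g : BF k) : ℝ :=
  C * ∑ f₁, ∑ f₂, ∑ j ∈ range (2 ^ k), G f₁ f₂ * ind f₁ f₂ j f g

lemma ind_nonneg (f₁ f₂ : BF k) (j : ℕ) (f g : BF k) : 0 ≤ ind f₁ f₂ j f g := by
  unfold ind; split <;> norm_num

lemma ind_symm (f₁ f₂ : BF k) (j : ℕ) (f g : BF k) :
    ind f₁ f₂ j f g = ind f₁ f₂ j g f := by
  unfold ind
  exact if_congr (by tauto) rfl rfl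

lemma Gtil_symm (C : ℝ) (G : BF k → BF k → ℝ) (f g : BF k) :
    Gtil C G f g = Gtil C G g f := by
  unfold Gtil
  simp only [fun f₁ f₂ j => ind_symm f₁ f₂ j f g]

lemma Gtil_nonneg {C : ℝ} (hC : 0 ≤ C) {G : BF k → BF k → ℝ}
    (hG0 : ∀ f₁ f₂, 0 ≤ G f₁ f₂) (f g : BF k) : 0 ≤ Gtil C G f g := by
  unfold Gtil
  apply mul_nonneg hC
  refine Finset.sum_nonneg fun f₁ _ => Finset.sum_nonneg fun f₂ _ =>
    Finset.sum_nonneg fun j _ => mul_nonneg (hG0 f₁ f₂) (ind_nonneg _ _ _ _ _)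

lemma Gtil_diag (C : ℝ) (G : BF k → BF k → ℝ) (f : BF k) : Gtil C G f f = 0 := by
  unfold Gtil
  rw [mul_eq_zero]
  right
  refine Finset.sum_eq_zero fun f₁ _ => Finset.sum_eq_zero fun f₂ _ =>
    Finset.sum_eq_zero fun j _ => ?_
  rw [ind, if_neg, mul_zero]
  rintro ⟨hne, (⟨h1, h2⟩ | ⟨h1, h2⟩)⟩ <;> exact hne (h1 ▸ h2 ▸ rfl)

lemma negB_negB (f : BF k) : negB (negB f) = f := by
  funext x; simp [negB]

lemma Gtil_neg (hk : 1 ≤ k) (C : ℝ) (G : BF k → BF k → ℝ) (f : BF k) :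
    Gtil C G f (negB f) = 0 := by
  unfold Gtil
  rw [mul_eq_zero]
  right
  refine Finset.sum_eq_zero fun f₁ _ => Finset.sum_eq_zero fun f₂ _ => ?_
  refine Finset.sum_eq_zero fun j hj => ?_
  rw [ind, if_neg, mul_zero]
  rintro ⟨hne, (⟨h1, h2⟩ | ⟨h1, h2⟩)⟩
  · exact pf_ne_neg hk (Finset.mem_range.mp hj)
      (by rw [← h1, ← h2, negB_negB])
  · exact pf_ne_neg hk (Finset.mem_range.mp hj) (by rw [← h2, ← h1])

lemma sum_pair {a b : BF k} (hab : a ≠ b) (h : BF k → BF k → ℝ) :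
    (∑ f, ∑ g, (if (f = a ∧ g = b) ∨ (f = b ∧ g = a) then (1:ℝ) else 0) * h f g)
      = h a b + h b a := by
  have key : ∀ f g : BF k,
      (if (f = a ∧ g = b) ∨ (f = b ∧ g = a) then (1:ℝ) else 0) * h f g
        = (if g = b then (if f = a then h f g else 0) else 0)
          + (if g = a then (if f = b then h f g else 0) else 0) := by
    intro f g
    by_cases h1 : f = a <;> by_cases h2 : f = b <;>
      by_cases h3 : g = a <;> by_cases h4 : g = b <;>
      simp_all <;> first | ring | (exfalso; exact hab (h1 ▸ h2 ▸ rfl))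
  simp only [key, Finset.sum_add_distrib, Finset.sum_ite_eq', Finset.mem_univ, if_true]

lemma sum_ind_mul (f₁ f₂ : BF k) (j : ℕ) (h : BF k → BF k → ℝ)
    (hsymm : ∀ a b, h a b = h b a) :
    (∑ f, ∑ g, ind f₁ f₂ j f g * h f g)
      = 2 * (if pf f₁ f₂ j = pf f₁ f₂ (j + 1) then (0:ℝ)
          else h (pf f₁ f₂ j) (pf f₁ f₂ (j + 1))) := by
  by_cases hp : pf f₁ f₂ j = pf f₁ f₂ (j + 1)
  · rw [if_pos hp, mul_zero]
    refine Finset.sum_eq_zero fun f _ => Finset.sum_eq_zero fun g _ => ?_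
    rw [ind, if_neg (by tauto), zero_mul]
  · rw [if_neg hp]
    have : ∀ f g : BF k, ind f₁ f₂ j f g
        = if (f = pf f₁ f₂ j ∧ g = pf f₁ f₂ (j + 1))
            ∨ (f = pf f₁ f₂ (j + 1) ∧ g = pf f₁ f₂ j) then (1:ℝ) else 0 := by
      intro f g
      unfold ind
      exact if_congr (by tauto) rfl rfl
    simp only [this]
    rw [sum_pair hp h, hsymm (pf f₁ f₂ (j + 1)) (pf f₁ f₂ j)]
    ring

lemma sum_swap_aux (F : (BF k × BF k) → BF k → BF k → ℕ → ℝ) :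
    (∑ p : BF k × BF k, ∑ f₁, ∑ f₂, ∑ j ∈ range (2 ^ k), F p f₁ f₂ j)
      = ∑ f₁, ∑ f₂, ∑ j ∈ range (2 ^ k), ∑ p : BF k × BF k, F p f₁ f₂ j := by
  rw [Finset.sum_comm]
  refine Finset.sum_congr rfl fun f₁ _ => ?_
  rw [Finset.sum_comm]
  refine Finset.sum_congr rfl fun f₂ _ => ?_
  rw [Finset.sum_comm]

/-- The master computation: a symmetric weighted half-sum over the subdivided gadget. -/
lemma half_sum (C : ℝ) (G : BF k → BF k → ℝ) (h : BF k → BF k → ℝ)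
    (hsymm : ∀ a b, h a b = h b a) :
    (1 / 2 : ℝ) * ∑ f, ∑ g, Gtil C G f g * h f g
      = C * ∑ f₁, ∑ f₂, G f₁ f₂ *
          ∑ j ∈ range (2 ^ k), (if pf f₁ f₂ j = pf f₁ f₂ (j + 1) then (0:ℝ)
            else h (pf f₁ f₂ j) (pf f₁ f₂ (j + 1))) := by
  have expand : ∀ f g : BF k, Gtil C G f g * h f g
      = ∑ f₁, ∑ f₂, ∑ j ∈ range (2 ^ k),
          C * (G f₁ f₂ * (ind f₁ f₂ j f g * h f g)) := by
    intro f g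
    unfold Gtil
    rw [mul_comm (C * _) (h f g), Finset.mul_sum, Finset.mul_sum]
    simp only [Finset.mul_sum]
    refine Finset.sum_congr rfl fun f₁ _ => Finset.sum_congr rfl fun f₂ _ =>
      Finset.sum_congr rfl fun j _ => ?_
    ring
  calc (1 / 2 : ℝ) * ∑ f, ∑ g, Gtil C G f g * h f g
      = (1 / 2 : ℝ) * ∑ p : BF k × BF k, ∑ f₁, ∑ f₂, ∑ j ∈ range (2 ^ k),
          C * (G f₁ f₂ * (ind f₁ f₂ j p.1 p.2 * h p.1 p.2)) := by
        rw [Fintype.sum_prod_type]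
        simp only [expand]
    _ = (1 / 2 : ℝ) * ∑ f₁, ∑ f₂, ∑ j ∈ range (2 ^ k), ∑ p : BF k × BF k,
          C * (G f₁ f₂ * (ind f₁ f₂ j p.1 p.2 * h p.1 p.2)) := by
        rw [sum_swap_aux]
    _ = C * ∑ f₁, ∑ f₂, G f₁ f₂ *
          ∑ j ∈ range (2 ^ k), (if pf f₁ f₂ j = pf f₁ f₂ (j + 1) then (0:ℝ)
            else h (pf f₁ f₂ j) (pf f₁ f₂ (j + 1))) := by
        rw [Finset.mul_sum, Finset.mul_sum]
        refine Finset.sum_congr rfl fun f₁ _ => ?_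
        rw [Finset.mul_sum, Finset.mul_sum]
        refine Finset.sum_congr rfl fun f₂ _ => ?_
        have inner : ∀ j, (∑ p : BF k × BF k,
            C * (G f₁ f₂ * (ind f₁ f₂ j p.1 p.2 * h p.1 p.2)))
              = C * (G f₁ f₂ * (2 * (if pf f₁ f₂ j = pf f₁ f₂ (j + 1) then (0:ℝ)
                else h (pf f₁ f₂ j) (pf f₁ f₂ (j + 1))))) := by
          intro j
          rw [← Finset.mul_sum, ← Finset.mul_sum, ← sum_ind_mul f₁ f₂ j h hsymm,
            Fintype.sum_prod_type]
        simp only [inner]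
        simp only [← Finset.mul_sum]
        ring


lemma ndistB_symm (a b : BF k) : ndistB a b = ndistB b a := by
  unfold ndistB
  congr 1
  exact Finset.sum_congr rfl fun x _ => if_congr eq_comm rfl rfl

lemma ndistB_nonneg (a b : BF k) : 0 ≤ ndistB a b := by
  unfold ndistB
  apply mul_nonneg (by positivity)
  refine Finset.sum_nonneg fun x _ => ?_
  split <;> norm_num

/-- Total mass of the subdivided gadget. -/
lemma Gtil_total (C : ℝ) (G : BF k → BF k → ℝ) :
    (1 / 2 : ℝ) * ∑ f, ∑ g, Gtil C G f g
      = C * (2 ^ k : ℝ) * ∑ f₁, ∑ f₂, G f₁ f₂ * ndistB f₁ f₂ := by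
  have h1 : (1 / 2 : ℝ) * ∑ f, ∑ g, Gtil C G f g
      = (1 / 2 : ℝ) * ∑ f, ∑ g, Gtil C G f g * (fun _ _ => (1:ℝ)) f g := by
    simp
  rw [h1, half_sum C G (fun _ _ => (1:ℝ)) (fun _ _ => rfl)]
  simp only [Dsum_eq]
  have key : ∀ f₁ f₂ : BF k, G f₁ f₂ * ((2 ^ k : ℝ) * ndistB f₁ f₂)
      = (2 ^ k : ℝ) * (G f₁ f₂ * ndistB f₁ f₂) := fun _ _ => by ring
  simp only [key, ← Finset.mul_sum]
  ring

/-- Total weighted distance of the subdivided gadget. -/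
lemma Gtil_ndist (C : ℝ) (G : BF k → BF k → ℝ) :
    (1 / 2 : ℝ) * ∑ f, ∑ g, Gtil C G f g * ndistB f g
      = C * ∑ f₁, ∑ f₂, G f₁ f₂ * ndistB f₁ f₂ := by
  rw [half_sum C G ndistB ndistB_symm]
  have inner : ∀ f₁ f₂ : BF k,
      (∑ j ∈ range (2 ^ k), if pf f₁ f₂ j = pf f₁ f₂ (j + 1) then (0:ℝ)
        else ndistB (pf f₁ f₂ j) (pf f₁ f₂ (j + 1))) = ndistB f₁ f₂ := by
    intro f₁ f₂
    have h2 : (∑ j ∈ range (2 ^ k), if pf f₁ f₂ j = pf f₁ f₂ (j + 1) then (0:ℝ)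
        else ndistB (pf f₁ f₂ j) (pf f₁ f₂ (j + 1)))
          = (2 ^ k : ℝ)⁻¹ * ∑ j ∈ range (2 ^ k),
              (if pf f₁ f₂ j = pf f₁ f₂ (j + 1) then (0:ℝ) else 1) := by
      rw [Finset.mul_sum]
      refine Finset.sum_congr rfl fun j hj => ?_
      by_cases hp : pf f₁ f₂ j = pf f₁ f₂ (j + 1)
      · rw [if_pos hp, if_pos hp, mul_zero]
      · rw [if_neg hp, if_neg hp, ndist_adj (Finset.mem_range.mp hj) hp, mul_one]
    rw [h2, Dsum_eq, ← mul_assoc, inv_mul_cancel₀ (by positivity), one_mul]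
  simp only [inner]

/-- unsatisfied-edge indicator. -/
def uind (A : BF k → ZMod 2) (a b : BF k) : ℝ := if A a = A b then 0 else 1

lemma uind_symm (A : BF k → ZMod 2) (a b : BF k) : uind A a b = uind A b a := by
  unfold uind
  exact if_congr eq_comm rfl rfl

lemma uind_nonneg (A : BF k → ZMod 2) (a b : BF k) : 0 ≤ uind A a b := by
  unfold uind; split <;> norm_num

/-- `val = total − unsat`, generically. -/
lemma valA_eq (H : BF k → BF k → ℝ) (A : BF k → ZMod 2) :
    valA H A = (1 / 2 : ℝ) * (∑ f, ∑ g, H f g)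
      - (1 / 2 : ℝ) * ∑ f, ∑ g, H f g * uind A f g := by
  unfold valA uind
  rw [← mul_sub, ← Finset.sum_sub_distrib]
  congr 1
  refine Finset.sum_congr rfl fun f _ => ?_
  rw [← Finset.sum_sub_distrib]
  refine Finset.sum_congr rfl fun g _ => ?_
  by_cases h : A f = A g <;> simp [h]

lemma inner_unsat_ge (A : BF k → ZMod 2) (f₁ f₂ : BF k) :
    uind A f₁ f₂ ≤ ∑ j ∈ range (2 ^ k),
      (if pf f₁ f₂ j = pf f₁ f₂ (j + 1) then (0:ℝ)
        else uind A (pf f₁ f₂ j) (pf f₁ f₂ (j + 1))) := by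
  have hterm : ∀ j ∈ range (2 ^ k), (0:ℝ) ≤
      (if pf f₁ f₂ j = pf f₁ f₂ (j + 1) then (0:ℝ)
        else uind A (pf f₁ f₂ j) (pf f₁ f₂ (j + 1))) := by
    intro j _
    split
    · exact le_rfl
    · exact uind_nonneg A _ _
  by_cases hA : A f₁ = A f₂
  · rw [uind, if_pos hA]
    exact Finset.sum_nonneg hterm
  · obtain ⟨j, hjm, hj⟩ := exists_cut A f₁ f₂ hA
    have hp : pf f₁ f₂ j ≠ pf f₁ f₂ (j + 1) := fun h => hj (by rw [h])
    have hval : (if pf f₁ f₂ j = pf f₁ f₂ (j + 1) then (0:ℝ)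
        else uind A (pf f₁ f₂ j) (pf f₁ f₂ (j + 1))) = 1 := by
      rw [if_neg hp, uind, if_neg hj]
    calc uind A f₁ f₂ = 1 := by rw [uind, if_neg hA]
      _ ≤ _ := by
          rw [← hval]
          exact Finset.single_le_sum hterm hjm

/-- The key soundness inequality for the subdivided gadget. -/
lemma Gtil_unsat_ge {C : ℝ} (hC : 0 ≤ C) {G : BF k → BF k → ℝ}
    (hG0 : ∀ f₁ f₂, 0 ≤ G f₁ f₂) (A : BF k → ZMod 2) :
    C * ∑ f₁, ∑ f₂, G f₁ f₂ * uind A f₁ f₂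
      ≤ (1 / 2 : ℝ) * ∑ f, ∑ g, Gtil C G f g * uind A f g := by
  rw [half_sum C G (uind A) (uind_symm A)]
  apply mul_le_mul_of_nonneg_left _ hC
  refine Finset.sum_le_sum fun f₁ _ => Finset.sum_le_sum fun f₂ _ => ?_
  exact mul_le_mul_of_nonneg_left (inner_unsat_ge A f₁ f₂) (hG0 f₁ f₂)


lemma ndistB_pos {a b : BF k} (hab : a ≠ b) : 0 < ndistB a b := by
  obtain ⟨x, hx⟩ := Function.ne_iff.mp hab
  unfold ndistB
  apply mul_pos (by positivity)
  have h1 : (1:ℝ) ≤ ∑ y, if a y = b y then (0:ℝ) else 1 := by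
    calc (1:ℝ) = if a x = b x then (0:ℝ) else 1 := by rw [if_neg hx]
      _ ≤ ∑ y, if a y = b y then (0:ℝ) else 1 :=
        Finset.single_le_sum (f := fun y => if a y = b y then (0:ℝ) else 1)
          (fun y _ => by split <;> norm_num) (Finset.mem_univ x)
  linarith

lemma delta_pos {G : BF k → BF k → ℝ} (hG0 : ∀ f₁ f₂, 0 ≤ G f₁ f₂)
    (hGdiag : ∀ f, G f f = 0)
    (hGtot : (1 / 2 : ℝ) * ∑ f₁, ∑ f₂, G f₁ f₂ = 1) :
    0 < (1 / 2 : ℝ) * ∑ f₁, ∑ f₂, G f₁ f₂ * ndistB f₁ f₂ := by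
  by_contra h
  push_neg at h
  have hinn : ∀ f₁ : BF k, ∀ f₂ ∈ univ, (0:ℝ) ≤ G f₁ f₂ * ndistB f₁ f₂ :=
    fun f₁ f₂ _ => mul_nonneg (hG0 _ _) (ndistB_nonneg _ _)
  have hnn : ∀ f₁ ∈ univ, (0:ℝ) ≤ ∑ f₂, G f₁ f₂ * ndistB f₁ f₂ :=
    fun f₁ _ => Finset.sum_nonneg (hinn f₁)
  have hS : (0:ℝ) ≤ ∑ f₁, ∑ f₂, G f₁ f₂ * ndistB f₁ f₂ := Finset.sum_nonneg hnn
  have hz : (∑ f₁, ∑ f₂, G f₁ f₂ * ndistB f₁ f₂) = 0 := le_antisymm (by linarith) hS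
  have hGzero : ∀ f₁ f₂ : BF k, G f₁ f₂ = 0 := by
    intro f₁ f₂
    by_cases hd : f₁ = f₂
    · rw [hd]; exact hGdiag f₂
    · have h1 := (Finset.sum_eq_zero_iff_of_nonneg hnn).mp hz f₁ (Finset.mem_univ f₁)
      have h2 := (Finset.sum_eq_zero_iff_of_nonneg (hinn f₁)).mp h1 f₂ (Finset.mem_univ f₂)
      rcases mul_eq_zero.mp h2 with h3 | h3
      · exact h3
      · exact absurd h3.symm (ne_of_lt (ndistB_pos hd))
  rw [Finset.sum_eq_zero (fun f₁ _ => Finset.sum_eq_zero fun f₂ _ => hGzero f₁ f₂)]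
    at hGtot
  norm_num at hGtot

lemma rsFold_mem :
    (fun f : BF k => if f (fun _ => 0) = true then (1 : ZMod 2) else 0) ∈ rsFoldSet k := by
  rw [rsFoldSet, Finset.mem_filter]
  refine ⟨Finset.mem_univ _, fun f _ => ?_⟩
  by_cases h : f (fun _ => 0) = true
  · simp [negB, h]
    decide
  · simp [negB, h]

lemma valA_le_total {H : BF k → BF k → ℝ} (h0 : ∀ f g, 0 ≤ H f g) (A : BF k → ZMod 2) :
    valA H A ≤ (1 / 2 : ℝ) * ∑ f, ∑ g, H f g := by
  unfold valA
  apply mul_le_mul_of_nonneg_left _ (by norm_num)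
  refine Finset.sum_le_sum fun f _ => Finset.sum_le_sum fun g _ => ?_
  by_cases h : A f = A g
  · rw [if_pos h, mul_one]
  · rw [if_neg h, mul_zero]; exact h0 f g

end Wiman

/-- For any `Had_k`-to-`2Lin(2)` gadget `G` there exists a gadget `G̃` with completeness
`1 − 2^{−k}` such that `(1 − rs(G))/(1 − c(G)) ≤ (1 − rs(G̃))/(1 − c(G̃))`. -/
theorem exists_gadget_max_completeness {k : ℕ} (hk : 2 ≤ k) (G : BF k → BF k → ℝ)
    (hGsymm : ∀ f₁ f₂, G f₁ f₂ = G f₂ f₁) (hG0 : ∀ f₁ f₂, 0 ≤ G f₁ f₂)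
    (hGdiag : ∀ f, G f f = 0) (hGneg : ∀ f, G f (negB f) = 0)
    (hGtot : (1 / 2 : ℝ) * ∑ f₁, ∑ f₂, G f₁ f₂ = 1) :
    ∃ Gt : BF k → BF k → ℝ,
      (∀ f₁ f₂, Gt f₁ f₂ = Gt f₂ f₁) ∧ (∀ f₁ f₂, 0 ≤ Gt f₁ f₂) ∧
      (∀ f, Gt f f = 0) ∧ (∀ f, Gt f (negB f) = 0) ∧
      (1 / 2 : ℝ) * ∑ f₁, ∑ f₂, Gt f₁ f₂ = 1 ∧
      completeness Gt = 1 - (2 ^ k : ℝ)⁻¹ ∧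
      (1 - rsoundness G) / (1 - completeness G)
        ≤ (1 - rsoundness Gt) / (1 - completeness Gt) := by
  classical
  have hk1 : 1 ≤ k := by omega
  set δ : ℝ := (1 / 2 : ℝ) * ∑ f₁, ∑ f₂, G f₁ f₂ * ndistB f₁ f₂ with hδ
  have hδpos : 0 < δ := Wiman.delta_pos hG0 hGdiag hGtot
  set C : ℝ := ((2 : ℝ) * 2 ^ k * δ)⁻¹ with hCdef
  have hCpos : 0 < C := by rw [hCdef]; positivity
  have hsum2 : (∑ f₁, ∑ f₂, G f₁ f₂ * ndistB f₁ f₂) = 2 * δ := by rw [hδ]; ring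
  have htot : (1 / 2 : ℝ) * ∑ f, ∑ g, Wiman.Gtil C G f g = 1 := by
    rw [Wiman.Gtil_total, hsum2, hCdef]
    field_simp
  have h9 : C * ∑ f₁, ∑ f₂, G f₁ f₂ * ndistB f₁ f₂ = (2 ^ k : ℝ)⁻¹ := by
    rw [hsum2, hCdef]
    field_simp
  have hcomp : completeness (Wiman.Gtil C G) = 1 - (2 ^ k : ℝ)⁻¹ := by
    unfold completeness
    rw [Wiman.Gtil_ndist, h9]
  -- per-assignment value bound
  have hval : ∀ A : BF k → ZMod 2,
      valA (Wiman.Gtil C G) A ≤ 1 - 2 * C * (1 - valA G A) := by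
    intro A
    have h1 : valA (Wiman.Gtil C G) A
        = 1 - (1 / 2 : ℝ) * ∑ f, ∑ g, Wiman.Gtil C G f g * Wiman.uind A f g := by
      rw [Wiman.valA_eq, htot]
    have h2 : valA G A
        = 1 - (1 / 2 : ℝ) * ∑ f, ∑ g, G f g * Wiman.uind A f g := by
      rw [Wiman.valA_eq, hGtot]
    have h3 := Wiman.Gtil_unsat_ge hCpos.le hG0 A
    have h4 : (∑ f₁, ∑ f₂, G f₁ f₂ * Wiman.uind A f₁ f₂) = 2 * (1 - valA G A) := by
      rw [h2]; ring
    rw [h4] at h3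
    linarith
  -- relaxed soundness comparison
  have hrs : rsoundness (Wiman.Gtil C G)
      ≤ 1 - 2 * C + 2 * C * rsoundness G := by
    unfold rsoundness
    set n : ℕ := (rsFoldSet k).card with hn
    have hnpos : 0 < n := Finset.card_pos.mpr ⟨_, Wiman.rsFold_mem⟩
    have hbddG : ∀ P : BF k → ZMod 2, BddAbove {v : ℝ | ∃ A : BF k → ZMod 2,
        (∀ f, (Primary f ∨ f = oneB k ∨ f = negOneB k) → A f = P f) ∧ v = valA G A} := by
      intro P
      refine ⟨1, ?_⟩
      rintro v ⟨A, hA, rfl⟩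
      calc valA G A ≤ (1 / 2 : ℝ) * ∑ f, ∑ g, G f g := Wiman.valA_le_total hG0 A
        _ = 1 := hGtot
    have hneGt : ∀ P : BF k → ZMod 2, Set.Nonempty {v : ℝ | ∃ A : BF k → ZMod 2,
        (∀ f, (Primary f ∨ f = oneB k ∨ f = negOneB k) → A f = P f) ∧
          v = valA (Wiman.Gtil C G) A} :=
      fun P => ⟨valA (Wiman.Gtil C G) P, P, fun f _ => rfl, rfl⟩
    have hsup : ∀ P : BF k → ZMod 2,
        sSup {v : ℝ | ∃ A : BF k → ZMod 2,
          (∀ f, (Primary f ∨ f = oneB k ∨ f = negOneB k) → A f = P f) ∧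
            v = valA (Wiman.Gtil C G) A}
        ≤ 1 - 2 * C + 2 * C * sSup {v : ℝ | ∃ A : BF k → ZMod 2,
          (∀ f, (Primary f ∨ f = oneB k ∨ f = negOneB k) → A f = P f) ∧
            v = valA G A} := by
      intro P
      apply csSup_le (hneGt P)
      rintro v ⟨A, hA, rfl⟩
      have h1 := hval A
      have h2 : valA G A ≤ sSup {v : ℝ | ∃ A : BF k → ZMod 2,
          (∀ f, (Primary f ∨ f = oneB k ∨ f = negOneB k) → A f = P f) ∧
            v = valA G A} := le_csSup (hbddG P) ⟨A, hA, rfl⟩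
      nlinarith [hCpos.le]
    have hstep := Finset.sum_le_sum fun P (_ : P ∈ rsFoldSet k) => hsup P
    have hcard0 : ((n : ℝ)) ≠ 0 := Nat.cast_ne_zero.mpr hnpos.ne'
    calc ((n : ℝ))⁻¹ * ∑ P ∈ rsFoldSet k,
          sSup {v : ℝ | ∃ A : BF k → ZMod 2,
            (∀ f, (Primary f ∨ f = oneB k ∨ f = negOneB k) → A f = P f) ∧
              v = valA (Wiman.Gtil C G) A}
        ≤ ((n : ℝ))⁻¹ * ∑ P ∈ rsFoldSet k,
            (1 - 2 * C + 2 * C * sSup {v : ℝ | ∃ A : BF k → ZMod 2,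
              (∀ f, (Primary f ∨ f = oneB k ∨ f = negOneB k) → A f = P f) ∧
                v = valA G A}) :=
          mul_le_mul_of_nonneg_left hstep (inv_nonneg.mpr (Nat.cast_nonneg n))
      _ = 1 - 2 * C + 2 * C * (((n : ℝ))⁻¹ * ∑ P ∈ rsFoldSet k,
            sSup {v : ℝ | ∃ A : BF k → ZMod 2,
              (∀ f, (Primary f ∨ f = oneB k ∨ f = negOneB k) → A f = P f) ∧
                v = valA G A}) := by
          rw [Finset.sum_add_distrib, Finset.sum_const, ← Finset.mul_sum, ← hn]
          rw [nsmul_eq_mul]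
          field_simp
  refine ⟨Wiman.Gtil C G, Wiman.Gtil_symm C G, Wiman.Gtil_nonneg hCpos.le hG0,
    Wiman.Gtil_diag C G, Wiman.Gtil_neg hk1 C G, htot, hcomp, ?_⟩
  have e1 : 1 - completeness G = δ := by unfold completeness; rw [hδ]; ring
  have e2 : 1 - completeness (Wiman.Gtil C G) = (2 ^ k : ℝ)⁻¹ := by rw [hcomp]; ring
  rw [e1, e2, div_le_div_iff₀ hδpos (by positivity)]
  have hCδ : 2 * C * δ = (2 ^ k : ℝ)⁻¹ := by
    rw [hCdef]
    field_simp
  have h7 : 2 * C * (1 - rsoundness G) ≤ 1 - rsoundness (Wiman.Gtil C G) := by linarith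
  calc (1 - rsoundness G) * (2 ^ k : ℝ)⁻¹
      = (2 * C * (1 - rsoundness G)) * δ := by rw [← hCδ]; ring
    _ ≤ (1 - rsoundness (Wiman.Gtil C G)) * δ :=
        mul_le_mul_of_nonneg_right h7 hδpos.le


end
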